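/- In R = 𝔽₂[t₁,t₂,t₃], write ρ_a = Σ_{i∈a} t_i for nonempty a ⊆ {1,2,3}. Consider the five quadruples A₁ = (ρ₁, ρ₂, ρ₁₂, ρ₃), A₂ = (ρ₁, ρ₂, ρ₁₂, ρ₁₃), A₃ = (ρ₁, ρ₂, ρ₁₂, ρ₂₃), A₄ = (ρ₁, ρ₂, ρ₁₂, ρ₁₂₃), A₅ = (ρ₃, ρ₁₃, ρ₂₃, ρ₁₂₃). Then for every symmetric polynomial f over 𝔽₂ in 4 variables, the element Σ_{i=1}^{5} f(A_i)/σ₄(A_i) of the field of fractions K of R lies in the image of R in K. -/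

import Mathlib

open MvPolynomial

noncomputable section

/-- The polynomial ring `R = 𝔽₂[t₁,t₂,t₃]`. -/
abbrev R3 : Type := MvPolynomial (Fin 3) (ZMod 2)

/-- The field of fractions `K` of `R`. -/
abbrev K3 : Type := FractionRing R3

/-- The canonical map `R → K`. -/
def toK3 : R3 →+* K3 := algebraMap _ _

/-- `ρ₁ = t₁`. -/ def r1 : R3 := X 0
/-- `ρ₂ = t₂`. -/ def r2 : R3 := X 1
/-- `ρ₃ = t₃`. -/ def r3 : R3 := X 2
/-- `ρ₁₂ = t₁ + t₂`. -/ def r12 : R3 := X 0 + X 1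
/-- `ρ₁₃ = t₁ + t₃`. -/ def r13 : R3 := X 0 + X 2
/-- `ρ₂₃ = t₂ + t₃`. -/ def r23 : R3 := X 1 + X 2
/-- `ρ₁₂₃ = t₁ + t₂ + t₃`. -/ def r123 : R3 := X 0 + X 1 + X 2

/-- The localization term `f(A)/σ₄(A)` in `K` attached to a quadruple `A` of
elements of `R` and a polynomial `f` in 4 variables over `𝔽₂`. -/
def trm (A : Fin 4 → R3) (f : MvPolynomial (Fin 4) (ZMod 2)) : K3 :=
  toK3 (aeval A f) / toK3 (∏ i, A i)

set_option linter.unusedVariables false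
set_option linter.unreachableTactic false
set_option linter.unusedTactic false

abbrev R2' : Type := MvPolynomial (Fin 2) (ZMod 2)
def pr : R3 →ₐ[ZMod 2] R2' := aeval ![0, X 0, X 1]

lemma two_R3 : (2 : R3) = 0 := by
  have := CharP.cast_eq_zero R3 2
  exact_mod_cast this

lemma two_R2 : (2 : R2') = 0 := by
  have := CharP.cast_eq_zero R2' 2
  exact_mod_cast this

lemma X0_dvd_iff (q : R3) : X 0 ∣ q ↔ pr q = 0 := by
  have hE : Polynomial.constantCoeff.comp ((finSuccEquiv (ZMod 2) 2 : R3 ≃ₐ[ZMod 2] _) : R3 →+* Polynomial R2') = (pr : R3 →+* R2') := by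
    apply MvPolynomial.ringHom_ext
    · intro a; simp [pr, finSuccEquiv_apply, algebraMap_eq]
    · intro i
      refine Fin.cases ?_ (fun j => ?_) i
      · simp [pr, finSuccEquiv_X_zero]
      · fin_cases j <;>
          simp only [RingHom.coe_comp, Function.comp_apply, RingHom.coe_coe,
            Polynomial.constantCoeff_apply, Fin.isValue]
        all_goals rw [finSuccEquiv_X_succ, Polynomial.coeff_C_zero]
        all_goals simp [pr]
  have hE' : ∀ p : R3, Polynomial.constantCoeff (finSuccEquiv (ZMod 2) 2 p) = pr p :=
    fun p => DFunLike.congr_fun hE p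
  constructor
  · rintro ⟨c, rfl⟩
    simp [pr]
  · intro h
    have h0 : (finSuccEquiv (ZMod 2) 2 q).coeff 0 = 0 := by
      have := hE' q; rw [h] at this; exact this
    have hx : Polynomial.X ∣ finSuccEquiv (ZMod 2) 2 q := Polynomial.X_dvd_iff.mpr h0
    rw [← finSuccEquiv_X_zero (R := ZMod 2) (n := 2)] at hx
    exact (map_dvd_iff (finSuccEquiv (ZMod 2) 2)).mp hx

lemma form_dvd_iff (u : Fin 3 → R3) (h : ∀ i, aeval u (u i) = X i) (N : R3) :
    u 0 ∣ N ↔ aeval (fun i => pr (u i)) N = 0 := by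
  have hid : ∀ p : R3, aeval u (aeval u p) = p := by
    intro p
    have hcomp : (aeval u).comp (aeval u) = AlgHom.id (ZMod 2) R3 := by
      apply MvPolynomial.algHom_ext
      intro i
      simp only [AlgHom.coe_comp, Function.comp_apply, aeval_X, AlgHom.id_apply]
      exact h i
    calc aeval u (aeval u p) = ((aeval u).comp (aeval u)) p := rfl
      _ = p := by rw [hcomp]; rfl
  have key : u 0 ∣ N ↔ X 0 ∣ aeval u N := by
    constructor
    · rintro ⟨c, rfl⟩
      exact ⟨aeval u c, by rw [map_mul, h 0]⟩
    · rintro ⟨c, hc⟩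
      refine ⟨aeval u c, ?_⟩
      have := congrArg (aeval u) hc
      rw [hid] at this
      rw [this, map_mul, aeval_X]
  rw [key, X0_dvd_iff, comp_aeval_apply]

lemma form_prime (u : Fin 3 → R3) (h : ∀ i, aeval u (u i) = X i) : Prime (u 0) := by
  constructor
  · intro h0
    have := h 0
    rw [h0, map_zero] at this
    exact X_ne_zero 0 this.symm
  constructor
  · intro hu
    obtain ⟨c, hc⟩ := hu.dvd (α := R3) (a := 1)
    have : u 0 ∣ (1 : R3) := ⟨c, hc⟩
    rw [form_dvd_iff u h] at this
    simp at this
  · intro a b hab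
    rw [form_dvd_iff u h, map_mul, mul_eq_zero] at hab
    rcases hab with h' | h'
    · exact Or.inl ((form_dvd_iff u h a).mpr h')
    · exact Or.inr ((form_dvd_iff u h b).mpr h')

lemma notdvd (p q : R3) (v : Fin 3 → ZMod 2) (hp : eval v p = 0) (hq : eval v q = 1) :
    ¬ p ∣ q := by
  rintro ⟨c, rfl⟩
  rw [map_mul, hp, zero_mul] at hq
  exact one_ne_zero hq.symm

lemma peel {p : R3} (hp : Prime p) (q m : R3) (hpq : ¬ p ∣ q) (h : p ∣ q * m) : p ∣ m :=
  (hp.dvd_mul.mp h).resolve_left hpq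

def u1 : Fin 3 → R3 := ![X 0, X 1, X 2]
def u2 : Fin 3 → R3 := ![X 1, X 0, X 2]
def u3 : Fin 3 → R3 := ![X 2, X 1, X 0]
def u4 : Fin 3 → R3 := ![X 0 + X 1, X 1, X 2]
def u5 : Fin 3 → R3 := ![X 0 + X 2, X 1, X 2]
def u6 : Fin 3 → R3 := ![X 1 + X 2, X 0 + X 2, X 2]
def u7 : Fin 3 → R3 := ![X 0 + X 1 + X 2, X 1, X 2]

lemma hu1 : ∀ i, aeval u1 (u1 i) = X i := by intro i; fin_cases i <;> simp [u1]
lemma hu2 : ∀ i, aeval u2 (u2 i) = X i := by intro i; fin_cases i <;> simp [u2]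
lemma hu3 : ∀ i, aeval u3 (u3 i) = X i := by intro i; fin_cases i <;> simp [u3]
lemma hu4 : ∀ i, aeval u4 (u4 i) = X i := by
  intro i; fin_cases i <;> simp [u4]
  linear_combination (X 1 : R3) * two_R3
lemma hu5 : ∀ i, aeval u5 (u5 i) = X i := by
  intro i; fin_cases i <;> simp [u5]
  linear_combination (X 2 : R3) * two_R3
lemma hu6 : ∀ i, aeval u6 (u6 i) = X i := by
  intro i; fin_cases i <;> simp [u6]
  · linear_combination (X 2 : R3) * two_R3
  · linear_combination (X 2 : R3) * two_R3
lemma hu7 : ∀ i, aeval u7 (u7 i) = X i := by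
  intro i; fin_cases i <;> simp [u7]
  linear_combination (X 1 + X 2 : R3) * two_R3

lemma hw1 : (fun i => pr (u1 i)) = ![0, X 0, X 1] := by
  funext i; fin_cases i <;> simp [pr, u1]
lemma hw2 : (fun i => pr (u2 i)) = ![X 0, 0, X 1] := by
  funext i; fin_cases i <;> simp [pr, u2]
lemma hw3 : (fun i => pr (u3 i)) = ![X 1, X 0, 0] := by
  funext i; fin_cases i <;> simp [pr, u3]
lemma hw4 : (fun i => pr (u4 i)) = ![X 0, X 0, X 1] := by
  funext i; fin_cases i <;> simp [pr, u4]
lemma hw5 : (fun i => pr (u5 i)) = ![X 1, X 0, X 1] := by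
  funext i; fin_cases i <;> simp [pr, u5]
lemma hw6 : (fun i => pr (u6 i)) = ![X 0 + X 1, X 1, X 1] := by
  funext i; fin_cases i <;> simp [pr, u6]
lemma hw7 : (fun i => pr (u7 i)) = ![X 0 + X 1, X 0, X 1] := by
  funext i; fin_cases i <;> simp [pr, u7]

lemma dvd1 (N : R3) : r1 ∣ N ↔ aeval (![0, X 0, X 1] : Fin 3 → R2') N = 0 := by
  have := form_dvd_iff u1 hu1 N; rwa [hw1] at this
lemma dvd2 (N : R3) : r2 ∣ N ↔ aeval (![X 0, 0, X 1] : Fin 3 → R2') N = 0 := by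
  have := form_dvd_iff u2 hu2 N; rwa [hw2] at this
lemma dvd3 (N : R3) : r3 ∣ N ↔ aeval (![X 1, X 0, 0] : Fin 3 → R2') N = 0 := by
  have := form_dvd_iff u3 hu3 N; rwa [hw3] at this
lemma dvd4 (N : R3) : r12 ∣ N ↔ aeval (![X 0, X 0, X 1] : Fin 3 → R2') N = 0 := by
  have := form_dvd_iff u4 hu4 N; rwa [hw4] at this
lemma dvd5 (N : R3) : r13 ∣ N ↔ aeval (![X 1, X 0, X 1] : Fin 3 → R2') N = 0 := by
  have := form_dvd_iff u5 hu5 N; rwa [hw5] at this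
lemma dvd6 (N : R3) : r23 ∣ N ↔ aeval (![X 0 + X 1, X 1, X 1] : Fin 3 → R2') N = 0 := by
  have := form_dvd_iff u6 hu6 N; rwa [hw6] at this
lemma dvd7 (N : R3) : r123 ∣ N ↔ aeval (![X 0 + X 1, X 0, X 1] : Fin 3 → R2') N = 0 := by
  have := form_dvd_iff u7 hu7 N; rwa [hw7] at this

lemma prime1 : Prime r1 := form_prime u1 hu1
lemma prime2 : Prime r2 := form_prime u2 hu2
lemma prime3 : Prime r3 := form_prime u3 hu3
lemma prime4 : Prime r12 := form_prime u4 hu4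
lemma prime5 : Prime r13 := form_prime u5 hu5
lemma prime6 : Prime r23 := form_prime u6 hu6
lemma prime7 : Prime r123 := form_prime u7 hu7


def A1 : Fin 4 → R3 := ![r1, r2, r12, r3]
def A2 : Fin 4 → R3 := ![r1, r2, r12, r13]
def A3 : Fin 4 → R3 := ![r1, r2, r12, r23]
def A4 : Fin 4 → R3 := ![r1, r2, r12, r123]
def A5 : Fin 4 → R3 := ![r3, r13, r23, r123]
def C1 : R3 := r13 * r23 * r123
def C2 : R3 := r3 * r23 * r123
def C3 : R3 := r3 * r13 * r123
def C4 : R3 := r3 * r13 * r23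
def C5 : R3 := r1 * r2 * r12
def DD : R3 := r1 * r2 * r3 * r12 * r13 * r23 * r123
def NN (f : MvPolynomial (Fin 4) (ZMod 2)) : R3 :=
  aeval A1 f * C1 + aeval A2 f * C2 + aeval A3 f * C3 + aeval A4 f * C4 + aeval A5 f * C5


def p3 : Equiv.Perm (Fin 4) := ⟨![3,0,1,2], ![1,2,3,0], by decide, by decide⟩

def p5 : Equiv.Perm (Fin 4) := ⟨![0,3,2,1], ![0,3,2,1], by decide, by decide⟩

def p6 : Equiv.Perm (Fin 4) := ⟨![1,2,3,0], ![3,0,1,2], by decide, by decide⟩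

def p7 : Equiv.Perm (Fin 4) := ⟨![2,1,0,3], ![2,1,0,3], by decide, by decide⟩

lemma comp1 (f : MvPolynomial (Fin 4) (ZMod 2)) (hf : f.IsSymmetric) :
    aeval (![0, X 0, X 1] : Fin 3 → R2') (NN f) = 0 := by
  clear hf
  have er_r1 : aeval (![0, X 0, X 1] : Fin 3 → R2') r1 = 0 := by
    simp [r1]
    all_goals first | rfl | ring1 | linear_combination (X 0 : R2') * two_R2 | linear_combination (X 1 : R2') * two_R2 | linear_combination ((X 0 : R2') + X 1) * two_R2
  have er_r2 : aeval (![0, X 0, X 1] : Fin 3 → R2') r2 = X 0 := by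
    simp [r2]
    all_goals first | rfl | ring1 | linear_combination (X 0 : R2') * two_R2 | linear_combination (X 1 : R2') * two_R2 | linear_combination ((X 0 : R2') + X 1) * two_R2
  have er_r3 : aeval (![0, X 0, X 1] : Fin 3 → R2') r3 = X 1 := by
    simp [r3]
    all_goals first | rfl | ring1 | linear_combination (X 0 : R2') * two_R2 | linear_combination (X 1 : R2') * two_R2 | linear_combination ((X 0 : R2') + X 1) * two_R2
  have er_r12 : aeval (![0, X 0, X 1] : Fin 3 → R2') r12 = X 0 := by
    simp [r12]
    all_goals first | rfl | ring1 | linear_combination (X 0 : R2') * two_R2 | linear_combination (X 1 : R2') * two_R2 | linear_combination ((X 0 : R2') + X 1) * two_R2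
  have er_r13 : aeval (![0, X 0, X 1] : Fin 3 → R2') r13 = X 1 := by
    simp [r13]
    all_goals first | rfl | ring1 | linear_combination (X 0 : R2') * two_R2 | linear_combination (X 1 : R2') * two_R2 | linear_combination ((X 0 : R2') + X 1) * two_R2
  have er_r23 : aeval (![0, X 0, X 1] : Fin 3 → R2') r23 = X 0 + X 1 := by
    simp [r23]
    all_goals first | rfl | ring1 | linear_combination (X 0 : R2') * two_R2 | linear_combination (X 1 : R2') * two_R2 | linear_combination ((X 0 : R2') + X 1) * two_R2
  have er_r123 : aeval (![0, X 0, X 1] : Fin 3 → R2') r123 = X 0 + X 1 := by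
    simp [r123]
    all_goals first | rfl | ring1 | linear_combination (X 0 : R2') * two_R2 | linear_combination (X 1 : R2') * two_R2 | linear_combination ((X 0 : R2') + X 1) * two_R2
  have hB1 : (fun j => aeval (![0, X 0, X 1] : Fin 3 → R2') (A1 j)) = (![0, X 0, X 0, X 1] : Fin 4 → R2') := by
    funext j; fin_cases j
    exacts [er_r1, er_r2, er_r12, er_r3]
  have hB2 : (fun j => aeval (![0, X 0, X 1] : Fin 3 → R2') (A2 j)) = (![0, X 0, X 0, X 1] : Fin 4 → R2') := by
    funext j; fin_cases j
    exacts [er_r1, er_r2, er_r12, er_r13]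
  have hB3 : (fun j => aeval (![0, X 0, X 1] : Fin 3 → R2') (A3 j)) = (![0, X 0, X 0, X 0 + X 1] : Fin 4 → R2') := by
    funext j; fin_cases j
    exacts [er_r1, er_r2, er_r12, er_r23]
  have hB4 : (fun j => aeval (![0, X 0, X 1] : Fin 3 → R2') (A4 j)) = (![0, X 0, X 0, X 0 + X 1] : Fin 4 → R2') := by
    funext j; fin_cases j
    exacts [er_r1, er_r2, er_r12, er_r123]
  have hB5 : (fun j => aeval (![0, X 0, X 1] : Fin 3 → R2') (A5 j)) = (![X 1, X 1, X 0 + X 1, X 0 + X 1] : Fin 4 → R2') := by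
    funext j; fin_cases j
    exacts [er_r3, er_r13, er_r23, er_r123]
  have hC1 : aeval (![0, X 0, X 1] : Fin 3 → R2') C1 = (X 1) * (X 0 + X 1) * (X 0 + X 1) := by
    simp only [C1, map_mul, er_r1, er_r2, er_r3, er_r12, er_r13, er_r23, er_r123]
  have hC2 : aeval (![0, X 0, X 1] : Fin 3 → R2') C2 = (X 1) * (X 0 + X 1) * (X 0 + X 1) := by
    simp only [C2, map_mul, er_r1, er_r2, er_r3, er_r12, er_r13, er_r23, er_r123]
  have hC3 : aeval (![0, X 0, X 1] : Fin 3 → R2') C3 = (X 1) * (X 1) * (X 0 + X 1) := by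
    simp only [C3, map_mul, er_r1, er_r2, er_r3, er_r12, er_r13, er_r23, er_r123]
  have hC4 : aeval (![0, X 0, X 1] : Fin 3 → R2') C4 = (X 1) * (X 1) * (X 0 + X 1) := by
    simp only [C4, map_mul, er_r1, er_r2, er_r3, er_r12, er_r13, er_r23, er_r123]
  have hC5 : aeval (![0, X 0, X 1] : Fin 3 → R2') C5 = (0) * (X 0) * (X 0) := by
    simp only [C5, map_mul, er_r1, er_r2, er_r3, er_r12, er_r13, er_r23, er_r123]
  simp only [NN, map_add, map_mul, comp_aeval_apply]
  rw [hB1, hB2, hB3, hB4, hB5, hC1, hC2, hC3, hC4, hC5]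
  linear_combination (aeval (![0, X 0, X 0, X 1] : Fin 4 → R2') f * ((X 1) * (X 0 + X 1) * (X 0 + X 1)) +
    aeval (![0, X 0, X 0, X 0 + X 1] : Fin 4 → R2') f * ((X 1) * (X 1) * (X 0 + X 1))) * two_R2

lemma comp2 (f : MvPolynomial (Fin 4) (ZMod 2)) (hf : f.IsSymmetric) :
    aeval (![X 0, 0, X 1] : Fin 3 → R2') (NN f) = 0 := by
  clear hf
  have er_r1 : aeval (![X 0, 0, X 1] : Fin 3 → R2') r1 = X 0 := by
    simp [r1]
    all_goals first | rfl | ring1 | linear_combination (X 0 : R2') * two_R2 | linear_combination (X 1 : R2') * two_R2 | linear_combination ((X 0 : R2') + X 1) * two_R2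
  have er_r2 : aeval (![X 0, 0, X 1] : Fin 3 → R2') r2 = 0 := by
    simp [r2]
    all_goals first | rfl | ring1 | linear_combination (X 0 : R2') * two_R2 | linear_combination (X 1 : R2') * two_R2 | linear_combination ((X 0 : R2') + X 1) * two_R2
  have er_r3 : aeval (![X 0, 0, X 1] : Fin 3 → R2') r3 = X 1 := by
    simp [r3]
    all_goals first | rfl | ring1 | linear_combination (X 0 : R2') * two_R2 | linear_combination (X 1 : R2') * two_R2 | linear_combination ((X 0 : R2') + X 1) * two_R2
  have er_r12 : aeval (![X 0, 0, X 1] : Fin 3 → R2') r12 = X 0 := by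
    simp [r12]
    all_goals first | rfl | ring1 | linear_combination (X 0 : R2') * two_R2 | linear_combination (X 1 : R2') * two_R2 | linear_combination ((X 0 : R2') + X 1) * two_R2
  have er_r13 : aeval (![X 0, 0, X 1] : Fin 3 → R2') r13 = X 0 + X 1 := by
    simp [r13]
    all_goals first | rfl | ring1 | linear_combination (X 0 : R2') * two_R2 | linear_combination (X 1 : R2') * two_R2 | linear_combination ((X 0 : R2') + X 1) * two_R2
  have er_r23 : aeval (![X 0, 0, X 1] : Fin 3 → R2') r23 = X 1 := by
    simp [r23]
    all_goals first | rfl | ring1 | linear_combination (X 0 : R2') * two_R2 | linear_combination (X 1 : R2') * two_R2 | linear_combination ((X 0 : R2') + X 1) * two_R2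
  have er_r123 : aeval (![X 0, 0, X 1] : Fin 3 → R2') r123 = X 0 + X 1 := by
    simp [r123]
    all_goals first | rfl | ring1 | linear_combination (X 0 : R2') * two_R2 | linear_combination (X 1 : R2') * two_R2 | linear_combination ((X 0 : R2') + X 1) * two_R2
  have hB1 : (fun j => aeval (![X 0, 0, X 1] : Fin 3 → R2') (A1 j)) = (![X 0, 0, X 0, X 1] : Fin 4 → R2') := by
    funext j; fin_cases j
    exacts [er_r1, er_r2, er_r12, er_r3]
  have hB2 : (fun j => aeval (![X 0, 0, X 1] : Fin 3 → R2') (A2 j)) = (![X 0, 0, X 0, X 0 + X 1] : Fin 4 → R2') := by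
    funext j; fin_cases j
    exacts [er_r1, er_r2, er_r12, er_r13]
  have hB3 : (fun j => aeval (![X 0, 0, X 1] : Fin 3 → R2') (A3 j)) = (![X 0, 0, X 0, X 1] : Fin 4 → R2') := by
    funext j; fin_cases j
    exacts [er_r1, er_r2, er_r12, er_r23]
  have hB4 : (fun j => aeval (![X 0, 0, X 1] : Fin 3 → R2') (A4 j)) = (![X 0, 0, X 0, X 0 + X 1] : Fin 4 → R2') := by
    funext j; fin_cases j
    exacts [er_r1, er_r2, er_r12, er_r123]
  have hB5 : (fun j => aeval (![X 0, 0, X 1] : Fin 3 → R2') (A5 j)) = (![X 1, X 0 + X 1, X 1, X 0 + X 1] : Fin 4 → R2') := by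
    funext j; fin_cases j
    exacts [er_r3, er_r13, er_r23, er_r123]
  have hC1 : aeval (![X 0, 0, X 1] : Fin 3 → R2') C1 = (X 0 + X 1) * (X 1) * (X 0 + X 1) := by
    simp only [C1, map_mul, er_r1, er_r2, er_r3, er_r12, er_r13, er_r23, er_r123]
  have hC2 : aeval (![X 0, 0, X 1] : Fin 3 → R2') C2 = (X 1) * (X 1) * (X 0 + X 1) := by
    simp only [C2, map_mul, er_r1, er_r2, er_r3, er_r12, er_r13, er_r23, er_r123]
  have hC3 : aeval (![X 0, 0, X 1] : Fin 3 → R2') C3 = (X 1) * (X 0 + X 1) * (X 0 + X 1) := by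
    simp only [C3, map_mul, er_r1, er_r2, er_r3, er_r12, er_r13, er_r23, er_r123]
  have hC4 : aeval (![X 0, 0, X 1] : Fin 3 → R2') C4 = (X 1) * (X 0 + X 1) * (X 1) := by
    simp only [C4, map_mul, er_r1, er_r2, er_r3, er_r12, er_r13, er_r23, er_r123]
  have hC5 : aeval (![X 0, 0, X 1] : Fin 3 → R2') C5 = (X 0) * (0) * (X 0) := by
    simp only [C5, map_mul, er_r1, er_r2, er_r3, er_r12, er_r13, er_r23, er_r123]
  simp only [NN, map_add, map_mul, comp_aeval_apply]
  rw [hB1, hB2, hB3, hB4, hB5, hC1, hC2, hC3, hC4, hC5]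
  linear_combination (aeval (![X 0, 0, X 0, X 1] : Fin 4 → R2') f * ((X 0 + X 1) * (X 1) * (X 0 + X 1)) +
    aeval (![X 0, 0, X 0, X 0 + X 1] : Fin 4 → R2') f * ((X 1) * (X 1) * (X 0 + X 1))) * two_R2

lemma comp3 (f : MvPolynomial (Fin 4) (ZMod 2)) (hf : f.IsSymmetric) :
    aeval (![X 1, X 0, 0] : Fin 3 → R2') (NN f) = 0 := by
  have _dummy := hf
  have er_r1 : aeval (![X 1, X 0, 0] : Fin 3 → R2') r1 = X 1 := by
    simp [r1]
    all_goals first | rfl | ring1 | linear_combination (X 0 : R2') * two_R2 | linear_combination (X 1 : R2') * two_R2 | linear_combination ((X 0 : R2') + X 1) * two_R2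
  have er_r2 : aeval (![X 1, X 0, 0] : Fin 3 → R2') r2 = X 0 := by
    simp [r2]
    all_goals first | rfl | ring1 | linear_combination (X 0 : R2') * two_R2 | linear_combination (X 1 : R2') * two_R2 | linear_combination ((X 0 : R2') + X 1) * two_R2
  have er_r3 : aeval (![X 1, X 0, 0] : Fin 3 → R2') r3 = 0 := by
    simp [r3]
    all_goals first | rfl | ring1 | linear_combination (X 0 : R2') * two_R2 | linear_combination (X 1 : R2') * two_R2 | linear_combination ((X 0 : R2') + X 1) * two_R2
  have er_r12 : aeval (![X 1, X 0, 0] : Fin 3 → R2') r12 = X 0 + X 1 := by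
    simp [r12]
    all_goals first | rfl | ring1 | linear_combination (X 0 : R2') * two_R2 | linear_combination (X 1 : R2') * two_R2 | linear_combination ((X 0 : R2') + X 1) * two_R2
  have er_r13 : aeval (![X 1, X 0, 0] : Fin 3 → R2') r13 = X 1 := by
    simp [r13]
    all_goals first | rfl | ring1 | linear_combination (X 0 : R2') * two_R2 | linear_combination (X 1 : R2') * two_R2 | linear_combination ((X 0 : R2') + X 1) * two_R2
  have er_r23 : aeval (![X 1, X 0, 0] : Fin 3 → R2') r23 = X 0 := by
    simp [r23]
    all_goals first | rfl | ring1 | linear_combination (X 0 : R2') * two_R2 | linear_combination (X 1 : R2') * two_R2 | linear_combination ((X 0 : R2') + X 1) * two_R2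
  have er_r123 : aeval (![X 1, X 0, 0] : Fin 3 → R2') r123 = X 0 + X 1 := by
    simp [r123]
    all_goals first | rfl | ring1 | linear_combination (X 0 : R2') * two_R2 | linear_combination (X 1 : R2') * two_R2 | linear_combination ((X 0 : R2') + X 1) * two_R2
  have hB1 : (fun j => aeval (![X 1, X 0, 0] : Fin 3 → R2') (A1 j)) = (![X 1, X 0, X 0 + X 1, 0] : Fin 4 → R2') := by
    funext j; fin_cases j
    exacts [er_r1, er_r2, er_r12, er_r3]
  have hB2 : (fun j => aeval (![X 1, X 0, 0] : Fin 3 → R2') (A2 j)) = (![X 1, X 0, X 0 + X 1, X 1] : Fin 4 → R2') := by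
    funext j; fin_cases j
    exacts [er_r1, er_r2, er_r12, er_r13]
  have hB3 : (fun j => aeval (![X 1, X 0, 0] : Fin 3 → R2') (A3 j)) = (![X 1, X 0, X 0 + X 1, X 0] : Fin 4 → R2') := by
    funext j; fin_cases j
    exacts [er_r1, er_r2, er_r12, er_r23]
  have hB4 : (fun j => aeval (![X 1, X 0, 0] : Fin 3 → R2') (A4 j)) = (![X 1, X 0, X 0 + X 1, X 0 + X 1] : Fin 4 → R2') := by
    funext j; fin_cases j
    exacts [er_r1, er_r2, er_r12, er_r123]
  have hB5 : (fun j => aeval (![X 1, X 0, 0] : Fin 3 → R2') (A5 j)) = (![0, X 1, X 0, X 0 + X 1] : Fin 4 → R2') := by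
    funext j; fin_cases j
    exacts [er_r3, er_r13, er_r23, er_r123]
  have hC1 : aeval (![X 1, X 0, 0] : Fin 3 → R2') C1 = (X 1) * (X 0) * (X 0 + X 1) := by
    simp only [C1, map_mul, er_r1, er_r2, er_r3, er_r12, er_r13, er_r23, er_r123]
  have hC2 : aeval (![X 1, X 0, 0] : Fin 3 → R2') C2 = (0) * (X 0) * (X 0 + X 1) := by
    simp only [C2, map_mul, er_r1, er_r2, er_r3, er_r12, er_r13, er_r23, er_r123]
  have hC3 : aeval (![X 1, X 0, 0] : Fin 3 → R2') C3 = (0) * (X 1) * (X 0 + X 1) := by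
    simp only [C3, map_mul, er_r1, er_r2, er_r3, er_r12, er_r13, er_r23, er_r123]
  have hC4 : aeval (![X 1, X 0, 0] : Fin 3 → R2') C4 = (0) * (X 1) * (X 0) := by
    simp only [C4, map_mul, er_r1, er_r2, er_r3, er_r12, er_r13, er_r23, er_r123]
  have hC5 : aeval (![X 1, X 0, 0] : Fin 3 → R2') C5 = (X 1) * (X 0) * (X 0 + X 1) := by
    simp only [C5, map_mul, er_r1, er_r2, er_r3, er_r12, er_r13, er_r23, er_r123]
  simp only [NN, map_add, map_mul, comp_aeval_apply]
  rw [hB1, hB2, hB3, hB4, hB5, hC1, hC2, hC3, hC4, hC5]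
  have hperm : (![0, X 1, X 0, X 0 + X 1] : Fin 4 → R2') = (![X 1, X 0, X 0 + X 1, 0] : Fin 4 → R2') ∘ (p3 : Equiv.Perm (Fin 4)) := by
    funext j; fin_cases j <;> rfl
  have hsym : aeval (![0, X 1, X 0, X 0 + X 1] : Fin 4 → R2') f = aeval (![X 1, X 0, X 0 + X 1, 0] : Fin 4 → R2') f := by
    rw [hperm, ← aeval_rename, hf p3]
  rw [hsym]
  linear_combination (aeval (![X 1, X 0, X 0 + X 1, 0] : Fin 4 → R2') f * ((X 1) * (X 0) * (X 0 + X 1))) * two_R2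

lemma comp4 (f : MvPolynomial (Fin 4) (ZMod 2)) (hf : f.IsSymmetric) :
    aeval (![X 0, X 0, X 1] : Fin 3 → R2') (NN f) = 0 := by
  clear hf
  have er_r1 : aeval (![X 0, X 0, X 1] : Fin 3 → R2') r1 = X 0 := by
    simp [r1]
    all_goals first | rfl | ring1 | linear_combination (X 0 : R2') * two_R2 | linear_combination (X 1 : R2') * two_R2 | linear_combination ((X 0 : R2') + X 1) * two_R2
  have er_r2 : aeval (![X 0, X 0, X 1] : Fin 3 → R2') r2 = X 0 := by
    simp [r2]
    all_goals first | rfl | ring1 | linear_combination (X 0 : R2') * two_R2 | linear_combination (X 1 : R2') * two_R2 | linear_combination ((X 0 : R2') + X 1) * two_R2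
  have er_r3 : aeval (![X 0, X 0, X 1] : Fin 3 → R2') r3 = X 1 := by
    simp [r3]
    all_goals first | rfl | ring1 | linear_combination (X 0 : R2') * two_R2 | linear_combination (X 1 : R2') * two_R2 | linear_combination ((X 0 : R2') + X 1) * two_R2
  have er_r12 : aeval (![X 0, X 0, X 1] : Fin 3 → R2') r12 = 0 := by
    simp [r12]
    all_goals first | rfl | ring1 | linear_combination (X 0 : R2') * two_R2 | linear_combination (X 1 : R2') * two_R2 | linear_combination ((X 0 : R2') + X 1) * two_R2
  have er_r13 : aeval (![X 0, X 0, X 1] : Fin 3 → R2') r13 = X 0 + X 1 := by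
    simp [r13]
    all_goals first | rfl | ring1 | linear_combination (X 0 : R2') * two_R2 | linear_combination (X 1 : R2') * two_R2 | linear_combination ((X 0 : R2') + X 1) * two_R2
  have er_r23 : aeval (![X 0, X 0, X 1] : Fin 3 → R2') r23 = X 0 + X 1 := by
    simp [r23]
    all_goals first | rfl | ring1 | linear_combination (X 0 : R2') * two_R2 | linear_combination (X 1 : R2') * two_R2 | linear_combination ((X 0 : R2') + X 1) * two_R2
  have er_r123 : aeval (![X 0, X 0, X 1] : Fin 3 → R2') r123 = X 1 := by
    simp [r123]
    all_goals first | rfl | ring1 | linear_combination (X 0 : R2') * two_R2 | linear_combination (X 1 : R2') * two_R2 | linear_combination ((X 0 : R2') + X 1) * two_R2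
  have hB1 : (fun j => aeval (![X 0, X 0, X 1] : Fin 3 → R2') (A1 j)) = (![X 0, X 0, 0, X 1] : Fin 4 → R2') := by
    funext j; fin_cases j
    exacts [er_r1, er_r2, er_r12, er_r3]
  have hB2 : (fun j => aeval (![X 0, X 0, X 1] : Fin 3 → R2') (A2 j)) = (![X 0, X 0, 0, X 0 + X 1] : Fin 4 → R2') := by
    funext j; fin_cases j
    exacts [er_r1, er_r2, er_r12, er_r13]
  have hB3 : (fun j => aeval (![X 0, X 0, X 1] : Fin 3 → R2') (A3 j)) = (![X 0, X 0, 0, X 0 + X 1] : Fin 4 → R2') := by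
    funext j; fin_cases j
    exacts [er_r1, er_r2, er_r12, er_r23]
  have hB4 : (fun j => aeval (![X 0, X 0, X 1] : Fin 3 → R2') (A4 j)) = (![X 0, X 0, 0, X 1] : Fin 4 → R2') := by
    funext j; fin_cases j
    exacts [er_r1, er_r2, er_r12, er_r123]
  have hB5 : (fun j => aeval (![X 0, X 0, X 1] : Fin 3 → R2') (A5 j)) = (![X 1, X 0 + X 1, X 0 + X 1, X 1] : Fin 4 → R2') := by
    funext j; fin_cases j
    exacts [er_r3, er_r13, er_r23, er_r123]
  have hC1 : aeval (![X 0, X 0, X 1] : Fin 3 → R2') C1 = (X 0 + X 1) * (X 0 + X 1) * (X 1) := by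
    simp only [C1, map_mul, er_r1, er_r2, er_r3, er_r12, er_r13, er_r23, er_r123]
  have hC2 : aeval (![X 0, X 0, X 1] : Fin 3 → R2') C2 = (X 1) * (X 0 + X 1) * (X 1) := by
    simp only [C2, map_mul, er_r1, er_r2, er_r3, er_r12, er_r13, er_r23, er_r123]
  have hC3 : aeval (![X 0, X 0, X 1] : Fin 3 → R2') C3 = (X 1) * (X 0 + X 1) * (X 1) := by
    simp only [C3, map_mul, er_r1, er_r2, er_r3, er_r12, er_r13, er_r23, er_r123]
  have hC4 : aeval (![X 0, X 0, X 1] : Fin 3 → R2') C4 = (X 1) * (X 0 + X 1) * (X 0 + X 1) := by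
    simp only [C4, map_mul, er_r1, er_r2, er_r3, er_r12, er_r13, er_r23, er_r123]
  have hC5 : aeval (![X 0, X 0, X 1] : Fin 3 → R2') C5 = (X 0) * (X 0) * (0) := by
    simp only [C5, map_mul, er_r1, er_r2, er_r3, er_r12, er_r13, er_r23, er_r123]
  simp only [NN, map_add, map_mul, comp_aeval_apply]
  rw [hB1, hB2, hB3, hB4, hB5, hC1, hC2, hC3, hC4, hC5]
  linear_combination (aeval (![X 0, X 0, 0, X 1] : Fin 4 → R2') f * ((X 0 + X 1) * (X 0 + X 1) * (X 1)) +
    aeval (![X 0, X 0, 0, X 0 + X 1] : Fin 4 → R2') f * ((X 1) * (X 0 + X 1) * (X 1))) * two_R2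

lemma comp5 (f : MvPolynomial (Fin 4) (ZMod 2)) (hf : f.IsSymmetric) :
    aeval (![X 1, X 0, X 1] : Fin 3 → R2') (NN f) = 0 := by
  have _dummy := hf
  have er_r1 : aeval (![X 1, X 0, X 1] : Fin 3 → R2') r1 = X 1 := by
    simp [r1]
    all_goals first | rfl | ring1 | linear_combination (X 0 : R2') * two_R2 | linear_combination (X 1 : R2') * two_R2 | linear_combination ((X 0 : R2') + X 1) * two_R2
  have er_r2 : aeval (![X 1, X 0, X 1] : Fin 3 → R2') r2 = X 0 := by
    simp [r2]
    all_goals first | rfl | ring1 | linear_combination (X 0 : R2') * two_R2 | linear_combination (X 1 : R2') * two_R2 | linear_combination ((X 0 : R2') + X 1) * two_R2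
  have er_r3 : aeval (![X 1, X 0, X 1] : Fin 3 → R2') r3 = X 1 := by
    simp [r3]
    all_goals first | rfl | ring1 | linear_combination (X 0 : R2') * two_R2 | linear_combination (X 1 : R2') * two_R2 | linear_combination ((X 0 : R2') + X 1) * two_R2
  have er_r12 : aeval (![X 1, X 0, X 1] : Fin 3 → R2') r12 = X 0 + X 1 := by
    simp [r12]
    all_goals first | rfl | ring1 | linear_combination (X 0 : R2') * two_R2 | linear_combination (X 1 : R2') * two_R2 | linear_combination ((X 0 : R2') + X 1) * two_R2
  have er_r13 : aeval (![X 1, X 0, X 1] : Fin 3 → R2') r13 = 0 := by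
    simp [r13]
    all_goals first | rfl | ring1 | linear_combination (X 0 : R2') * two_R2 | linear_combination (X 1 : R2') * two_R2 | linear_combination ((X 0 : R2') + X 1) * two_R2
  have er_r23 : aeval (![X 1, X 0, X 1] : Fin 3 → R2') r23 = X 0 + X 1 := by
    simp [r23]
    all_goals first | rfl | ring1 | linear_combination (X 0 : R2') * two_R2 | linear_combination (X 1 : R2') * two_R2 | linear_combination ((X 0 : R2') + X 1) * two_R2
  have er_r123 : aeval (![X 1, X 0, X 1] : Fin 3 → R2') r123 = X 0 := by
    simp [r123]
    all_goals first | rfl | ring1 | linear_combination (X 0 : R2') * two_R2 | linear_combination (X 1 : R2') * two_R2 | linear_combination ((X 0 : R2') + X 1) * two_R2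
  have hB1 : (fun j => aeval (![X 1, X 0, X 1] : Fin 3 → R2') (A1 j)) = (![X 1, X 0, X 0 + X 1, X 1] : Fin 4 → R2') := by
    funext j; fin_cases j
    exacts [er_r1, er_r2, er_r12, er_r3]
  have hB2 : (fun j => aeval (![X 1, X 0, X 1] : Fin 3 → R2') (A2 j)) = (![X 1, X 0, X 0 + X 1, 0] : Fin 4 → R2') := by
    funext j; fin_cases j
    exacts [er_r1, er_r2, er_r12, er_r13]
  have hB3 : (fun j => aeval (![X 1, X 0, X 1] : Fin 3 → R2') (A3 j)) = (![X 1, X 0, X 0 + X 1, X 0 + X 1] : Fin 4 → R2') := by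
    funext j; fin_cases j
    exacts [er_r1, er_r2, er_r12, er_r23]
  have hB4 : (fun j => aeval (![X 1, X 0, X 1] : Fin 3 → R2') (A4 j)) = (![X 1, X 0, X 0 + X 1, X 0] : Fin 4 → R2') := by
    funext j; fin_cases j
    exacts [er_r1, er_r2, er_r12, er_r123]
  have hB5 : (fun j => aeval (![X 1, X 0, X 1] : Fin 3 → R2') (A5 j)) = (![X 1, 0, X 0 + X 1, X 0] : Fin 4 → R2') := by
    funext j; fin_cases j
    exacts [er_r3, er_r13, er_r23, er_r123]
  have hC1 : aeval (![X 1, X 0, X 1] : Fin 3 → R2') C1 = (0) * (X 0 + X 1) * (X 0) := by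
    simp only [C1, map_mul, er_r1, er_r2, er_r3, er_r12, er_r13, er_r23, er_r123]
  have hC2 : aeval (![X 1, X 0, X 1] : Fin 3 → R2') C2 = (X 1) * (X 0 + X 1) * (X 0) := by
    simp only [C2, map_mul, er_r1, er_r2, er_r3, er_r12, er_r13, er_r23, er_r123]
  have hC3 : aeval (![X 1, X 0, X 1] : Fin 3 → R2') C3 = (X 1) * (0) * (X 0) := by
    simp only [C3, map_mul, er_r1, er_r2, er_r3, er_r12, er_r13, er_r23, er_r123]
  have hC4 : aeval (![X 1, X 0, X 1] : Fin 3 → R2') C4 = (X 1) * (0) * (X 0 + X 1) := by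
    simp only [C4, map_mul, er_r1, er_r2, er_r3, er_r12, er_r13, er_r23, er_r123]
  have hC5 : aeval (![X 1, X 0, X 1] : Fin 3 → R2') C5 = (X 1) * (X 0) * (X 0 + X 1) := by
    simp only [C5, map_mul, er_r1, er_r2, er_r3, er_r12, er_r13, er_r23, er_r123]
  simp only [NN, map_add, map_mul, comp_aeval_apply]
  rw [hB1, hB2, hB3, hB4, hB5, hC1, hC2, hC3, hC4, hC5]
  have hperm : (![X 1, 0, X 0 + X 1, X 0] : Fin 4 → R2') = (![X 1, X 0, X 0 + X 1, 0] : Fin 4 → R2') ∘ (p5 : Equiv.Perm (Fin 4)) := by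
    funext j; fin_cases j <;> rfl
  have hsym : aeval (![X 1, 0, X 0 + X 1, X 0] : Fin 4 → R2') f = aeval (![X 1, X 0, X 0 + X 1, 0] : Fin 4 → R2') f := by
    rw [hperm, ← aeval_rename, hf p5]
  rw [hsym]
  linear_combination (aeval (![X 1, X 0, X 0 + X 1, 0] : Fin 4 → R2') f * ((X 1) * (X 0 + X 1) * (X 0))) * two_R2

lemma comp6 (f : MvPolynomial (Fin 4) (ZMod 2)) (hf : f.IsSymmetric) :
    aeval (![X 0 + X 1, X 1, X 1] : Fin 3 → R2') (NN f) = 0 := by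
  have _dummy := hf
  have er_r1 : aeval (![X 0 + X 1, X 1, X 1] : Fin 3 → R2') r1 = X 0 + X 1 := by
    simp [r1]
    all_goals first | rfl | ring1 | linear_combination (X 0 : R2') * two_R2 | linear_combination (X 1 : R2') * two_R2 | linear_combination ((X 0 : R2') + X 1) * two_R2
  have er_r2 : aeval (![X 0 + X 1, X 1, X 1] : Fin 3 → R2') r2 = X 1 := by
    simp [r2]
    all_goals first | rfl | ring1 | linear_combination (X 0 : R2') * two_R2 | linear_combination (X 1 : R2') * two_R2 | linear_combination ((X 0 : R2') + X 1) * two_R2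
  have er_r3 : aeval (![X 0 + X 1, X 1, X 1] : Fin 3 → R2') r3 = X 1 := by
    simp [r3]
    all_goals first | rfl | ring1 | linear_combination (X 0 : R2') * two_R2 | linear_combination (X 1 : R2') * two_R2 | linear_combination ((X 0 : R2') + X 1) * two_R2
  have er_r12 : aeval (![X 0 + X 1, X 1, X 1] : Fin 3 → R2') r12 = X 0 := by
    simp [r12]
    all_goals first | rfl | ring1 | linear_combination (X 0 : R2') * two_R2 | linear_combination (X 1 : R2') * two_R2 | linear_combination ((X 0 : R2') + X 1) * two_R2
  have er_r13 : aeval (![X 0 + X 1, X 1, X 1] : Fin 3 → R2') r13 = X 0 := by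
    simp [r13]
    all_goals first | rfl | ring1 | linear_combination (X 0 : R2') * two_R2 | linear_combination (X 1 : R2') * two_R2 | linear_combination ((X 0 : R2') + X 1) * two_R2
  have er_r23 : aeval (![X 0 + X 1, X 1, X 1] : Fin 3 → R2') r23 = 0 := by
    simp [r23]
    all_goals first | rfl | ring1 | linear_combination (X 0 : R2') * two_R2 | linear_combination (X 1 : R2') * two_R2 | linear_combination ((X 0 : R2') + X 1) * two_R2
  have er_r123 : aeval (![X 0 + X 1, X 1, X 1] : Fin 3 → R2') r123 = X 0 + X 1 := by
    simp [r123]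
    all_goals first | rfl | ring1 | linear_combination (X 0 : R2') * two_R2 | linear_combination (X 1 : R2') * two_R2 | linear_combination ((X 0 : R2') + X 1) * two_R2
  have hB1 : (fun j => aeval (![X 0 + X 1, X 1, X 1] : Fin 3 → R2') (A1 j)) = (![X 0 + X 1, X 1, X 0, X 1] : Fin 4 → R2') := by
    funext j; fin_cases j
    exacts [er_r1, er_r2, er_r12, er_r3]
  have hB2 : (fun j => aeval (![X 0 + X 1, X 1, X 1] : Fin 3 → R2') (A2 j)) = (![X 0 + X 1, X 1, X 0, X 0] : Fin 4 → R2') := by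
    funext j; fin_cases j
    exacts [er_r1, er_r2, er_r12, er_r13]
  have hB3 : (fun j => aeval (![X 0 + X 1, X 1, X 1] : Fin 3 → R2') (A3 j)) = (![X 0 + X 1, X 1, X 0, 0] : Fin 4 → R2') := by
    funext j; fin_cases j
    exacts [er_r1, er_r2, er_r12, er_r23]
  have hB4 : (fun j => aeval (![X 0 + X 1, X 1, X 1] : Fin 3 → R2') (A4 j)) = (![X 0 + X 1, X 1, X 0, X 0 + X 1] : Fin 4 → R2') := by
    funext j; fin_cases j
    exacts [er_r1, er_r2, er_r12, er_r123]
  have hB5 : (fun j => aeval (![X 0 + X 1, X 1, X 1] : Fin 3 → R2') (A5 j)) = (![X 1, X 0, 0, X 0 + X 1] : Fin 4 → R2') := by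
    funext j; fin_cases j
    exacts [er_r3, er_r13, er_r23, er_r123]
  have hC1 : aeval (![X 0 + X 1, X 1, X 1] : Fin 3 → R2') C1 = (X 0) * (0) * (X 0 + X 1) := by
    simp only [C1, map_mul, er_r1, er_r2, er_r3, er_r12, er_r13, er_r23, er_r123]
  have hC2 : aeval (![X 0 + X 1, X 1, X 1] : Fin 3 → R2') C2 = (X 1) * (0) * (X 0 + X 1) := by
    simp only [C2, map_mul, er_r1, er_r2, er_r3, er_r12, er_r13, er_r23, er_r123]
  have hC3 : aeval (![X 0 + X 1, X 1, X 1] : Fin 3 → R2') C3 = (X 1) * (X 0) * (X 0 + X 1) := by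
    simp only [C3, map_mul, er_r1, er_r2, er_r3, er_r12, er_r13, er_r23, er_r123]
  have hC4 : aeval (![X 0 + X 1, X 1, X 1] : Fin 3 → R2') C4 = (X 1) * (X 0) * (0) := by
    simp only [C4, map_mul, er_r1, er_r2, er_r3, er_r12, er_r13, er_r23, er_r123]
  have hC5 : aeval (![X 0 + X 1, X 1, X 1] : Fin 3 → R2') C5 = (X 0 + X 1) * (X 1) * (X 0) := by
    simp only [C5, map_mul, er_r1, er_r2, er_r3, er_r12, er_r13, er_r23, er_r123]
  simp only [NN, map_add, map_mul, comp_aeval_apply]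
  rw [hB1, hB2, hB3, hB4, hB5, hC1, hC2, hC3, hC4, hC5]
  have hperm : (![X 1, X 0, 0, X 0 + X 1] : Fin 4 → R2') = (![X 0 + X 1, X 1, X 0, 0] : Fin 4 → R2') ∘ (p6 : Equiv.Perm (Fin 4)) := by
    funext j; fin_cases j <;> rfl
  have hsym : aeval (![X 1, X 0, 0, X 0 + X 1] : Fin 4 → R2') f = aeval (![X 0 + X 1, X 1, X 0, 0] : Fin 4 → R2') f := by
    rw [hperm, ← aeval_rename, hf p6]
  rw [hsym]
  linear_combination (aeval (![X 0 + X 1, X 1, X 0, 0] : Fin 4 → R2') f * ((X 1) * (X 0) * (X 0 + X 1))) * two_R2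

lemma comp7 (f : MvPolynomial (Fin 4) (ZMod 2)) (hf : f.IsSymmetric) :
    aeval (![X 0 + X 1, X 0, X 1] : Fin 3 → R2') (NN f) = 0 := by
  have _dummy := hf
  have er_r1 : aeval (![X 0 + X 1, X 0, X 1] : Fin 3 → R2') r1 = X 0 + X 1 := by
    simp [r1]
    all_goals first | rfl | ring1 | linear_combination (X 0 : R2') * two_R2 | linear_combination (X 1 : R2') * two_R2 | linear_combination ((X 0 : R2') + X 1) * two_R2
  have er_r2 : aeval (![X 0 + X 1, X 0, X 1] : Fin 3 → R2') r2 = X 0 := by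
    simp [r2]
    all_goals first | rfl | ring1 | linear_combination (X 0 : R2') * two_R2 | linear_combination (X 1 : R2') * two_R2 | linear_combination ((X 0 : R2') + X 1) * two_R2
  have er_r3 : aeval (![X 0 + X 1, X 0, X 1] : Fin 3 → R2') r3 = X 1 := by
    simp [r3]
    all_goals first | rfl | ring1 | linear_combination (X 0 : R2') * two_R2 | linear_combination (X 1 : R2') * two_R2 | linear_combination ((X 0 : R2') + X 1) * two_R2
  have er_r12 : aeval (![X 0 + X 1, X 0, X 1] : Fin 3 → R2') r12 = X 1 := by
    simp [r12]
    all_goals first | rfl | ring1 | linear_combination (X 0 : R2') * two_R2 | linear_combination (X 1 : R2') * two_R2 | linear_combination ((X 0 : R2') + X 1) * two_R2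
  have er_r13 : aeval (![X 0 + X 1, X 0, X 1] : Fin 3 → R2') r13 = X 0 := by
    simp [r13]
    all_goals first | rfl | ring1 | linear_combination (X 0 : R2') * two_R2 | linear_combination (X 1 : R2') * two_R2 | linear_combination ((X 0 : R2') + X 1) * two_R2
  have er_r23 : aeval (![X 0 + X 1, X 0, X 1] : Fin 3 → R2') r23 = X 0 + X 1 := by
    simp [r23]
    all_goals first | rfl | ring1 | linear_combination (X 0 : R2') * two_R2 | linear_combination (X 1 : R2') * two_R2 | linear_combination ((X 0 : R2') + X 1) * two_R2
  have er_r123 : aeval (![X 0 + X 1, X 0, X 1] : Fin 3 → R2') r123 = 0 := by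
    simp [r123]
    all_goals first | rfl | ring1 | linear_combination (X 0 : R2') * two_R2 | linear_combination (X 1 : R2') * two_R2 | linear_combination ((X 0 : R2') + X 1) * two_R2
  have hB1 : (fun j => aeval (![X 0 + X 1, X 0, X 1] : Fin 3 → R2') (A1 j)) = (![X 0 + X 1, X 0, X 1, X 1] : Fin 4 → R2') := by
    funext j; fin_cases j
    exacts [er_r1, er_r2, er_r12, er_r3]
  have hB2 : (fun j => aeval (![X 0 + X 1, X 0, X 1] : Fin 3 → R2') (A2 j)) = (![X 0 + X 1, X 0, X 1, X 0] : Fin 4 → R2') := by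
    funext j; fin_cases j
    exacts [er_r1, er_r2, er_r12, er_r13]
  have hB3 : (fun j => aeval (![X 0 + X 1, X 0, X 1] : Fin 3 → R2') (A3 j)) = (![X 0 + X 1, X 0, X 1, X 0 + X 1] : Fin 4 → R2') := by
    funext j; fin_cases j
    exacts [er_r1, er_r2, er_r12, er_r23]
  have hB4 : (fun j => aeval (![X 0 + X 1, X 0, X 1] : Fin 3 → R2') (A4 j)) = (![X 0 + X 1, X 0, X 1, 0] : Fin 4 → R2') := by
    funext j; fin_cases j
    exacts [er_r1, er_r2, er_r12, er_r123]
  have hB5 : (fun j => aeval (![X 0 + X 1, X 0, X 1] : Fin 3 → R2') (A5 j)) = (![X 1, X 0, X 0 + X 1, 0] : Fin 4 → R2') := by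
    funext j; fin_cases j
    exacts [er_r3, er_r13, er_r23, er_r123]
  have hC1 : aeval (![X 0 + X 1, X 0, X 1] : Fin 3 → R2') C1 = (X 0) * (X 0 + X 1) * (0) := by
    simp only [C1, map_mul, er_r1, er_r2, er_r3, er_r12, er_r13, er_r23, er_r123]
  have hC2 : aeval (![X 0 + X 1, X 0, X 1] : Fin 3 → R2') C2 = (X 1) * (X 0 + X 1) * (0) := by
    simp only [C2, map_mul, er_r1, er_r2, er_r3, er_r12, er_r13, er_r23, er_r123]
  have hC3 : aeval (![X 0 + X 1, X 0, X 1] : Fin 3 → R2') C3 = (X 1) * (X 0) * (0) := by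
    simp only [C3, map_mul, er_r1, er_r2, er_r3, er_r12, er_r13, er_r23, er_r123]
  have hC4 : aeval (![X 0 + X 1, X 0, X 1] : Fin 3 → R2') C4 = (X 1) * (X 0) * (X 0 + X 1) := by
    simp only [C4, map_mul, er_r1, er_r2, er_r3, er_r12, er_r13, er_r23, er_r123]
  have hC5 : aeval (![X 0 + X 1, X 0, X 1] : Fin 3 → R2') C5 = (X 0 + X 1) * (X 0) * (X 1) := by
    simp only [C5, map_mul, er_r1, er_r2, er_r3, er_r12, er_r13, er_r23, er_r123]
  simp only [NN, map_add, map_mul, comp_aeval_apply]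
  rw [hB1, hB2, hB3, hB4, hB5, hC1, hC2, hC3, hC4, hC5]
  have hperm : (![X 1, X 0, X 0 + X 1, 0] : Fin 4 → R2') = (![X 0 + X 1, X 0, X 1, 0] : Fin 4 → R2') ∘ (p7 : Equiv.Perm (Fin 4)) := by
    funext j; fin_cases j <;> rfl
  have hsym : aeval (![X 1, X 0, X 0 + X 1, 0] : Fin 4 → R2') f = aeval (![X 0 + X 1, X 0, X 1, 0] : Fin 4 → R2') f := by
    rw [hperm, ← aeval_rename, hf p7]
  rw [hsym]
  linear_combination (aeval (![X 0 + X 1, X 0, X 1, 0] : Fin 4 → R2') f * ((X 1) * (X 0) * (X 0 + X 1))) * two_R2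

lemma nd21 : ¬ r2 ∣ r1 := notdvd _ _ ![1,0,0] (by simp [r2]) (by simp [r1])
lemma nd31 : ¬ r3 ∣ r1 := notdvd _ _ ![1,1,0] (by simp [r3]) (by simp [r1])
lemma nd32 : ¬ r3 ∣ r2 := notdvd _ _ ![1,1,0] (by simp [r3]) (by simp [r2])
lemma nd41 : ¬ r12 ∣ r1 := notdvd _ _ ![1,1,1] (by simp [r12] <;> decide) (by simp [r1])
lemma nd42 : ¬ r12 ∣ r2 := notdvd _ _ ![1,1,1] (by simp [r12] <;> decide) (by simp [r2])
lemma nd43 : ¬ r12 ∣ r3 := notdvd _ _ ![1,1,1] (by simp [r12] <;> decide) (by simp [r3])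
lemma nd51 : ¬ r13 ∣ r1 := notdvd _ _ ![1,1,1] (by simp [r13] <;> decide) (by simp [r1])
lemma nd52 : ¬ r13 ∣ r2 := notdvd _ _ ![1,1,1] (by simp [r13] <;> decide) (by simp [r2])
lemma nd53 : ¬ r13 ∣ r3 := notdvd _ _ ![1,1,1] (by simp [r13] <;> decide) (by simp [r3])
lemma nd54 : ¬ r13 ∣ r12 := notdvd _ _ ![1,0,1] (by simp [r13] <;> decide) (by simp [r12])
lemma nd61 : ¬ r23 ∣ r1 := notdvd _ _ ![1,1,1] (by simp [r23] <;> decide) (by simp [r1])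
lemma nd62 : ¬ r23 ∣ r2 := notdvd _ _ ![1,1,1] (by simp [r23] <;> decide) (by simp [r2])
lemma nd63 : ¬ r23 ∣ r3 := notdvd _ _ ![1,1,1] (by simp [r23] <;> decide) (by simp [r3])
lemma nd64 : ¬ r23 ∣ r12 := notdvd _ _ ![0,1,1] (by simp [r23] <;> decide) (by simp [r12])
lemma nd65 : ¬ r23 ∣ r13 := notdvd _ _ ![0,1,1] (by simp [r23] <;> decide) (by simp [r13])
lemma nd71 : ¬ r123 ∣ r1 := notdvd _ _ ![1,1,0] (by simp [r123] <;> decide) (by simp [r1])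
lemma nd72 : ¬ r123 ∣ r2 := notdvd _ _ ![1,1,0] (by simp [r123] <;> decide) (by simp [r2])
lemma nd73 : ¬ r123 ∣ r3 := notdvd _ _ ![1,0,1] (by simp [r123] <;> decide) (by simp [r3])
lemma nd74 : ¬ r123 ∣ r12 := notdvd _ _ ![1,0,1] (by simp [r123] <;> decide) (by simp [r12])
lemma nd75 : ¬ r123 ∣ r13 := notdvd _ _ ![1,1,0] (by simp [r123] <;> decide) (by simp [r13])
lemma nd76 : ¬ r123 ∣ r23 := notdvd _ _ ![1,1,0] (by simp [r123] <;> decide) (by simp [r23])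

lemma toK3_ne {p : R3} (hp : p ≠ 0) : toK3 p ≠ 0 :=
  (map_ne_zero_iff toK3 (IsFractionRing.injective R3 K3)).mpr hp

lemma DD_ne : DD ≠ 0 := by
  refine mul_ne_zero (mul_ne_zero (mul_ne_zero (mul_ne_zero (mul_ne_zero (mul_ne_zero
    prime1.ne_zero prime2.ne_zero) prime3.ne_zero) prime4.ne_zero) prime5.ne_zero)
    prime6.ne_zero) prime7.ne_zero

lemma trm_eq (A : Fin 4 → R3) (Cc : R3) (f : MvPolynomial (Fin 4) (ZMod 2))
    (hs : toK3 (∏ i, A i) ≠ 0) (hD : (∏ i, A i) * Cc = DD) :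
    trm A f = toK3 (aeval A f * Cc) / toK3 DD := by
  rw [trm, div_eq_div_iff hs (toK3_ne DD_ne), ← toK3.map_mul, ← toK3.map_mul]
  congr 1
  rw [← hD]; ring

lemma dvd_NN (f : MvPolynomial (Fin 4) (ZMod 2)) (hf : f.IsSymmetric) : DD ∣ NN f := by
  obtain ⟨m1, e1⟩ := (dvd1 (NN f)).mpr (comp1 f hf)
  have d2 : r2 ∣ r1 * m1 := e1 ▸ (dvd2 (NN f)).mpr (comp2 f hf)
  obtain ⟨m2, e2⟩ := peel prime2 _ _ nd21 d2
  rw [e2] at e1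
  have d3 : r3 ∣ r1 * (r2 * m2) := e1 ▸ (dvd3 (NN f)).mpr (comp3 f hf)
  obtain ⟨m3, e3⟩ := peel prime3 _ _ nd32 (peel prime3 _ _ nd31 d3)
  rw [e3] at e1
  have d4 : r12 ∣ r1 * (r2 * (r3 * m3)) := e1 ▸ (dvd4 (NN f)).mpr (comp4 f hf)
  obtain ⟨m4, e4⟩ :=
    peel prime4 _ _ nd43 (peel prime4 _ _ nd42 (peel prime4 _ _ nd41 d4))
  rw [e4] at e1
  have d5 : r13 ∣ r1 * (r2 * (r3 * (r12 * m4))) := e1 ▸ (dvd5 (NN f)).mpr (comp5 f hf)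
  obtain ⟨m5, e5⟩ := peel prime5 _ _ nd54 (peel prime5 _ _ nd53
    (peel prime5 _ _ nd52 (peel prime5 _ _ nd51 d5)))
  rw [e5] at e1
  have d6 : r23 ∣ r1 * (r2 * (r3 * (r12 * (r13 * m5)))) :=
    e1 ▸ (dvd6 (NN f)).mpr (comp6 f hf)
  obtain ⟨m6, e6⟩ := peel prime6 _ _ nd65 (peel prime6 _ _ nd64 (peel prime6 _ _ nd63
    (peel prime6 _ _ nd62 (peel prime6 _ _ nd61 d6))))
  rw [e6] at e1
  have d7 : r123 ∣ r1 * (r2 * (r3 * (r12 * (r13 * (r23 * m6))))) :=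
    e1 ▸ (dvd7 (NN f)).mpr (comp7 f hf)
  obtain ⟨m7, e7⟩ := peel prime7 _ _ nd76 (peel prime7 _ _ nd75 (peel prime7 _ _ nd74
    (peel prime7 _ _ nd73 (peel prime7 _ _ nd72 (peel prime7 _ _ nd71 d7)))))
  rw [e7] at e1
  refine ⟨m7, ?_⟩
  rw [e1]
  show _ = r1 * r2 * r3 * r12 * r13 * r23 * r123 * m7
  ring

set_option maxHeartbeats 1000000 in
/-- for the five quadruples `A₁ = (ρ₁,ρ₂,ρ₁₂,ρ₃)`,
`A₂ = (ρ₁,ρ₂,ρ₁₂,ρ₁₃)`, `A₃ = (ρ₁,ρ₂,ρ₁₂,ρ₂₃)`, `A₄ = (ρ₁,ρ₂,ρ₁₂,ρ₁₂₃)`,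
`A₅ = (ρ₃,ρ₁₃,ρ₂₃,ρ₁₂₃)` and every symmetric polynomial `f` over `𝔽₂` in 4
variables, `∑ᵢ f(Aᵢ)/σ₄(Aᵢ)` lies in the image of `R` in `K`. -/
theorem stmt_13 :
    ∀ f : MvPolynomial (Fin 4) (ZMod 2), f.IsSymmetric →
      ∃ r : R3,
        trm ![r1, r2, r12, r3] f + trm ![r1, r2, r12, r13] f +
          trm ![r1, r2, r12, r23] f + trm ![r1, r2, r12, r123] f +
          trm ![r3, r13, r23, r123] f = toK3 r := by
  intro f hf
  have hp1 : (∏ i, A1 i) = r1 * r2 * r12 * r3 := by simp [A1, Fin.prod_univ_four]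
  have hp2 : (∏ i, A2 i) = r1 * r2 * r12 * r13 := by simp [A2, Fin.prod_univ_four]
  have hp3 : (∏ i, A3 i) = r1 * r2 * r12 * r23 := by simp [A3, Fin.prod_univ_four]
  have hp4 : (∏ i, A4 i) = r1 * r2 * r12 * r123 := by simp [A4, Fin.prod_univ_four]
  have hp5 : (∏ i, A5 i) = r3 * r13 * r23 * r123 := by simp [A5, Fin.prod_univ_four]
  have hn1 : toK3 (∏ i, A1 i) ≠ 0 := toK3_ne (by
    rw [hp1]
    exact mul_ne_zero (mul_ne_zero (mul_ne_zero prime1.ne_zero prime2.ne_zero)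
      prime4.ne_zero) prime3.ne_zero)
  have hn2 : toK3 (∏ i, A2 i) ≠ 0 := toK3_ne (by
    rw [hp2]
    exact mul_ne_zero (mul_ne_zero (mul_ne_zero prime1.ne_zero prime2.ne_zero)
      prime4.ne_zero) prime5.ne_zero)
  have hn3 : toK3 (∏ i, A3 i) ≠ 0 := toK3_ne (by
    rw [hp3]
    exact mul_ne_zero (mul_ne_zero (mul_ne_zero prime1.ne_zero prime2.ne_zero)
      prime4.ne_zero) prime6.ne_zero)
  have hn4 : toK3 (∏ i, A4 i) ≠ 0 := toK3_ne (by
    rw [hp4]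
    exact mul_ne_zero (mul_ne_zero (mul_ne_zero prime1.ne_zero prime2.ne_zero)
      prime4.ne_zero) prime7.ne_zero)
  have hn5 : toK3 (∏ i, A5 i) ≠ 0 := toK3_ne (by
    rw [hp5]
    exact mul_ne_zero (mul_ne_zero (mul_ne_zero prime3.ne_zero prime5.ne_zero)
      prime6.ne_zero) prime7.ne_zero)
  have t1 : trm A1 f = toK3 (aeval A1 f * C1) / toK3 DD :=
    trm_eq A1 C1 f hn1 (by rw [hp1]; show _ = r1 * r2 * r3 * r12 * r13 * r23 * r123
                           show _ * (r13 * r23 * r123) = _; ring)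
  have t2 : trm A2 f = toK3 (aeval A2 f * C2) / toK3 DD :=
    trm_eq A2 C2 f hn2 (by rw [hp2]; show _ * (r3 * r23 * r123) =
      r1 * r2 * r3 * r12 * r13 * r23 * r123; ring)
  have t3 : trm A3 f = toK3 (aeval A3 f * C3) / toK3 DD :=
    trm_eq A3 C3 f hn3 (by rw [hp3]; show _ * (r3 * r13 * r123) =
      r1 * r2 * r3 * r12 * r13 * r23 * r123; ring)
  have t4 : trm A4 f = toK3 (aeval A4 f * C4) / toK3 DD :=
    trm_eq A4 C4 f hn4 (by rw [hp4]; show _ * (r3 * r13 * r23) =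
      r1 * r2 * r3 * r12 * r13 * r23 * r123; ring)
  have t5 : trm A5 f = toK3 (aeval A5 f * C5) / toK3 DD :=
    trm_eq A5 C5 f hn5 (by rw [hp5]; show _ * (r1 * r2 * r12) =
      r1 * r2 * r3 * r12 * r13 * r23 * r123; ring)
  have key : trm A1 f + trm A2 f + trm A3 f + trm A4 f + trm A5 f
      = toK3 (NN f) / toK3 DD := by
    rw [t1, t2, t3, t4, t5, ← add_div, ← add_div, ← add_div,
      ← add_div, show NN f = aeval A1 f * C1 + aeval A2 f * C2 + aeval A3 f * C3
        + aeval A4 f * C4 + aeval A5 f * C5 from rfl, toK3.map_add, toK3.map_add, toK3.map_add, toK3.map_add]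
  obtain ⟨m, hm⟩ := dvd_NN f hf
  refine ⟨m, ?_⟩
  show trm A1 f + trm A2 f + trm A3 f + trm A4 f + trm A5 f = toK3 m
  rw [key, hm, toK3.map_mul, mul_div_cancel_left₀ _ (toK3_ne DD_ne)]

end
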